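/- (Exact solution of the membrane potential equation.) In the model setup, define for each ν ∈ N the excitatory current e_ν(t) = e_0(ν)·exp(−k_e(ν)(t − t_0)), and for each μ ∈ M the inhibitory current i_μ(t) = i_0(μ)·exp(−k_i(μ)(t − t_0)) + j_0(μ)·b_j(μ)·(exp(−k_i(μ)(t − t_0)) − exp(−k_j(μ)(t − t_0))). Then m(t_0) = m_0, and for every real t ≥ t_0 the function m is differentiable at t with m'(t) = −k_m·m(t) + Σ_{ν∈N} a_e(ν)·e_ν(t) + Σ_{μ∈M} a_i(μ)·i_μ(t). -/

import Mathlib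

open Real

lemma hasDerivAt_E (k t0 t : ℝ) :
    HasDerivAt (fun t => Real.exp (-k * (t - t0))) (-k * Real.exp (-k * (t - t0))) t := by
  have h := (((hasDerivAt_id t).sub_const t0).const_mul (-k)).exp
  simpa [mul_comm] using h

/-- Exact solution of the membrane potential equation: In the model
setup, with excitatory currents e_ν(t) = e₀(ν)·exp(-k_e(ν)(t-t₀)) and inhibitory
currents i_μ(t) = i₀(μ)·exp(-k_i(μ)(t-t₀)) + j₀(μ)·b_j(μ)·(exp(-k_i(μ)(t-t₀)) -
exp(-k_j(μ)(t-t₀))), one has m(t₀) = m₀ and, for every real t ≥ t₀, m is differentiable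
at t with m'(t) = -k_m·m(t) + Σ_ν a_e(ν)·e_ν(t) + Σ_μ a_i(μ)·i_μ(t). -/
theorem stmt_19
    (t0 m0 km : ℝ) (hkm : 0 < km)
    {N M : Type} [Fintype N] [Fintype M]
    (ke ae e0 : N → ℝ)
    (ki kj ai aj i0 j0 : M → ℝ)
    (hke : ∀ ν, 0 < ke ν) (hkem : ∀ ν, ke ν ≠ km)
    (hae : ∀ ν, 0 < ae ν) (he0 : ∀ ν, 0 ≤ e0 ν)
    (hki : ∀ μ, 0 < ki μ) (hkij : ∀ μ, ki μ < kj μ)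
    (hkim : ∀ μ, ki μ ≠ km) (hkjm : ∀ μ, kj μ ≠ km)
    (hai : ∀ μ, 0 < ai μ) (haj : ∀ μ, 0 < aj μ)
    (hi0 : ∀ μ, i0 μ ≤ 0) (hj0 : ∀ μ, j0 μ ≤ 0)
    (m : ℝ → ℝ)
    (hm : ∀ t : ℝ, m t =
      m0 * Real.exp (-km * (t - t0))
      + ∑ ν, e0 ν * (ae ν / (ke ν - km)) *
          (Real.exp (-km * (t - t0)) - Real.exp (-ke ν * (t - t0)))
      + ∑ μ, i0 μ * (ai μ / (ki μ - km)) *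
          (Real.exp (-km * (t - t0)) - Real.exp (-ki μ * (t - t0)))
      + ∑ μ, j0 μ * (ai μ / (ki μ - km)) * (aj μ / (kj μ - ki μ)) *
          ((Real.exp (-km * (t - t0)) - Real.exp (-ki μ * (t - t0)))
            - ((ki μ - km) / (kj μ - km)) *
              (Real.exp (-km * (t - t0)) - Real.exp (-kj μ * (t - t0)))))
    :
    m t0 = m0 ∧
    ∀ t : ℝ, t0 ≤ t →
      HasDerivAt m
        (-km * m t
          + ∑ ν, ae ν * (e0 ν * Real.exp (-ke ν * (t - t0)))
          + ∑ μ, ai μ *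
              (i0 μ * Real.exp (-ki μ * (t - t0)) +
                j0 μ * (aj μ / (kj μ - ki μ)) *
                  (Real.exp (-ki μ * (t - t0)) - Real.exp (-kj μ * (t - t0))))) t := by
  constructor
  · simp [hm t0]
  intro t ht
  have hmfun : m = fun t =>
      m0 * Real.exp (-km * (t - t0))
      + ∑ ν, e0 ν * (ae ν / (ke ν - km)) *
          (Real.exp (-km * (t - t0)) - Real.exp (-ke ν * (t - t0)))
      + ∑ μ, i0 μ * (ai μ / (ki μ - km)) *
          (Real.exp (-km * (t - t0)) - Real.exp (-ki μ * (t - t0)))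
      + ∑ μ, j0 μ * (ai μ / (ki μ - km)) * (aj μ / (kj μ - ki μ)) *
          ((Real.exp (-km * (t - t0)) - Real.exp (-ki μ * (t - t0)))
            - ((ki μ - km) / (kj μ - km)) *
              (Real.exp (-km * (t - t0)) - Real.exp (-kj μ * (t - t0)))) :=
    funext hm
  -- nonzero denominators
  have hkem' : ∀ ν, ke ν - km ≠ 0 := fun ν => sub_ne_zero.mpr (hkem ν)
  have hkim' : ∀ μ, ki μ - km ≠ 0 := fun μ => sub_ne_zero.mpr (hkim μ)
  have hkjm' : ∀ μ, kj μ - km ≠ 0 := fun μ => sub_ne_zero.mpr (hkjm μ)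
  have hkji' : ∀ μ, kj μ - ki μ ≠ 0 := fun μ => sub_ne_zero.mpr (hkij μ).ne'
  -- per-summand derivatives, already in RHS-shaped form
  have h0 : HasDerivAt (fun t => m0 * Real.exp (-km * (t - t0)))
      (-km * (m0 * Real.exp (-km * (t - t0)))) t := by
    have := (hasDerivAt_E km t0 t).const_mul m0
    refine this.congr_deriv ?_; ring
  have hB : ∀ ν : N, HasDerivAt (fun t => e0 ν * (ae ν / (ke ν - km)) *
      (Real.exp (-km * (t - t0)) - Real.exp (-ke ν * (t - t0))))
      (-km * (e0 ν * (ae ν / (ke ν - km)) *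
        (Real.exp (-km * (t - t0)) - Real.exp (-ke ν * (t - t0))))
        + ae ν * (e0 ν * Real.exp (-ke ν * (t - t0)))) t := by
    intro ν
    have := ((hasDerivAt_E km t0 t).sub (hasDerivAt_E (ke ν) t0 t)).const_mul
      (e0 ν * (ae ν / (ke ν - km)))
    refine this.congr_deriv ?_
    field_simp [hkem' ν]
    ring
  have hC : ∀ μ : M, HasDerivAt (fun t => i0 μ * (ai μ / (ki μ - km)) *
      (Real.exp (-km * (t - t0)) - Real.exp (-ki μ * (t - t0))))
      (-km * (i0 μ * (ai μ / (ki μ - km)) *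
        (Real.exp (-km * (t - t0)) - Real.exp (-ki μ * (t - t0))))
        + ai μ * (i0 μ * Real.exp (-ki μ * (t - t0)))) t := by
    intro μ
    have := ((hasDerivAt_E km t0 t).sub (hasDerivAt_E (ki μ) t0 t)).const_mul
      (i0 μ * (ai μ / (ki μ - km)))
    refine this.congr_deriv ?_
    field_simp [hkim' μ]
    ring
  have hD : ∀ μ : M, HasDerivAt (fun t => j0 μ * (ai μ / (ki μ - km)) * (aj μ / (kj μ - ki μ)) *
      ((Real.exp (-km * (t - t0)) - Real.exp (-ki μ * (t - t0)))
        - ((ki μ - km) / (kj μ - km)) *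
          (Real.exp (-km * (t - t0)) - Real.exp (-kj μ * (t - t0)))))
      (-km * (j0 μ * (ai μ / (ki μ - km)) * (aj μ / (kj μ - ki μ)) *
        ((Real.exp (-km * (t - t0)) - Real.exp (-ki μ * (t - t0)))
          - ((ki μ - km) / (kj μ - km)) *
            (Real.exp (-km * (t - t0)) - Real.exp (-kj μ * (t - t0)))))
        + ai μ * (j0 μ * (aj μ / (kj μ - ki μ)) *
            (Real.exp (-ki μ * (t - t0)) - Real.exp (-kj μ * (t - t0))))) t := by
    intro μ
    have := (((hasDerivAt_E km t0 t).sub (hasDerivAt_E (ki μ) t0 t)).sub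
      (((hasDerivAt_E km t0 t).sub (hasDerivAt_E (kj μ) t0 t)).const_mul
        ((ki μ - km) / (kj μ - km)))).const_mul
      (j0 μ * (ai μ / (ki μ - km)) * (aj μ / (kj μ - ki μ)))
    refine this.congr_deriv ?_
    field_simp [hkim' μ, hkjm' μ, hkji' μ]
    ring
  have htot := ((h0.add (HasDerivAt.fun_sum (u := Finset.univ) (fun ν _ => hB ν))).add
      (HasDerivAt.fun_sum (u := Finset.univ) (fun μ _ => hC μ))).add (HasDerivAt.fun_sum (u := Finset.univ) (fun μ _ => hD μ))
  rw [hmfun]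
  refine htot.congr_deriv ?_
  simp only [Finset.sum_add_distrib, mul_add, Finset.mul_sum]
  ring
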